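/- Let Q be a rate matrix with stationary distribution μ (all μ_i > 0) and let p be a probability distribution with all p_i > 0. If the adiabatic entropy production rate e_p^{(ad)} = (1/2)·Σ_{i,j}(p_i q_ij − p_j q_ji)·log((μ_i q_ij)/(μ_j q_ji)) equals zero, then the detailed balance condition μ_i q_ij = μ_j q_ji holds for all pairs i, j. Conversely, if detailed balance holds then e_p^{(ad)} = 0. -/

import Mathlib

open Finset

theorem adiabatic_ep_zero_iff_detailed_balance (N : ℕ) (q : Fin N → Fin N → ℝ)
    (μ p : Fin N → ℝ)
    (hq : ∀ i j, i ≠ j → 0 ≤ q i j)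
    (hqrow : ∀ i, ∑ j, q i j = 0)
    (hqsym : ∀ i j, i ≠ j → (0 < q i j ↔ 0 < q j i))
    (hμpos : ∀ i, 0 < μ i) (hμ1 : ∑ i, μ i = 1)
    (hstat : ∀ j, ∑ i, μ i * q i j = 0)
    (hppos : ∀ i, 0 < p i) (hp1 : ∑ i, p i = 1) :
    (1 / 2) * ∑ i, ∑ j, (p i * q i j - p j * q j i) *
        Real.log ((μ i * q i j) / (μ j * q j i)) = 0 ↔
      ∀ i j, μ i * q i j = μ j * q j i := by
  set L : Fin N → Fin N → ℝ := fun i j => Real.log ((μ i * q i j) / (μ j * q j i)) with hL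
  have hq0 : ∀ i j, i ≠ j → q i j = 0 → q j i = 0 := by
    intro i j hij h0
    by_contra h
    have h1 : 0 < q j i := lt_of_le_of_ne (hq j i hij.symm) (Ne.symm h)
    have := (hqsym i j hij).mpr h1
    linarith
  have hLdiag : ∀ i, L i i = 0 := by
    intro i
    by_cases h : μ i * q i i = 0
    · simp [hL, h]
    · rw [hL]; simp only
      rw [div_self h, Real.log_one]
  have hLanti : ∀ i j, L j i = - L i j := by
    intro i j
    by_cases hij : i = j
    · subst hij; rw [hLdiag i]; ring
    · by_cases h0 : q i j = 0
      · have h0' := hq0 i j hij h0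
        simp [hL, h0, h0']
      · have hqij : 0 < q i j := lt_of_le_of_ne (hq i j hij) (Ne.symm h0)
        have hqji : 0 < q j i := (hqsym i j hij).mp hqij
        have ha : (0:ℝ) < μ i * q i j := mul_pos (hμpos i) hqij
        have hb : (0:ℝ) < μ j * q j i := mul_pos (hμpos j) hqji
        rw [hL]
        simp only
        rw [← Real.log_inv]
        congr 1
        field_simp
  -- reduce the symmetrized sum to T = ∑∑ p i * q i j * L i j
  have hhalf : (1 / 2 : ℝ) * ∑ i, ∑ j, (p i * q i j - p j * q j i) * L i j
      = ∑ i, ∑ j, p i * q i j * L i j := by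
    have h1 : ∑ i, ∑ j, (p i * q i j - p j * q j i) * L i j
        = (∑ i, ∑ j, p i * q i j * L i j) - ∑ i, ∑ j, p j * q j i * L i j := by
      rw [← Finset.sum_sub_distrib]
      congr 1; ext i
      rw [← Finset.sum_sub_distrib]
      congr 1; ext j
      ring
    have h2 : ∑ i, ∑ j, p j * q j i * L i j = - ∑ i, ∑ j, p i * q i j * L i j := by
      rw [Finset.sum_comm]
      rw [← Finset.sum_neg_distrib]
      congr 1; ext j
      rw [← Finset.sum_neg_distrib]
      congr 1; ext i
      rw [hLanti i j]
      ring
    rw [h1, h2]; ring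
  set g : Fin N → Fin N → ℝ :=
    fun i j => p i * q i j * L i j - (p i * q i j - p i * (μ j * q j i) / μ i) with hg
  have hgnonneg : ∀ i j, 0 ≤ g i j := by
    intro i j
    by_cases hij : i = j
    · subst hij
      have h2 : p i * (μ i * q i i) / μ i = p i * q i i := by
        field_simp [(hμpos i).ne']
      have : g i i = 0 := by
        rw [hg]; simp only
        rw [hLdiag i, h2]; ring
      rw [this]
    · by_cases h0 : q i j = 0
      · have h0' := hq0 i j hij h0
        simp [hg, h0, h0']
      · have hqij : 0 < q i j := lt_of_le_of_ne (hq i j hij) (Ne.symm h0)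
        have hqji : 0 < q j i := (hqsym i j hij).mp hqij
        have ha : (0:ℝ) < μ i * q i j := mul_pos (hμpos i) hqij
        have hb : (0:ℝ) < μ j * q j i := mul_pos (hμpos j) hqji
        have hlog := Real.log_le_sub_one_of_pos (div_pos hb ha)
        have hLval : L i j = - Real.log ((μ j * q j i) / (μ i * q i j)) := by
          rw [hL]; simp only
          rw [← Real.log_inv]
          congr 1
          field_simp
        have hkey : 1 - (μ j * q j i) / (μ i * q i j) ≤ L i j := by
          rw [hLval]; linarith
        have hpq : 0 < p i * q i j := mul_pos (hppos i) hqij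
        have hmul : p i * q i j * (1 - (μ j * q j i) / (μ i * q i j))
            ≤ p i * q i j * L i j := by
          exact mul_le_mul_of_nonneg_left hkey hpq.le
        have hid : p i * q i j * (1 - (μ j * q j i) / (μ i * q i j))
            = p i * q i j - p i * (μ j * q j i) / μ i := by
          field_simp [(hμpos i).ne']
        rw [hg]; simp only
        linarith [hid ▸ hmul]
  have hT : ∑ i, ∑ j, p i * q i j * L i j = ∑ i, ∑ j, g i j := by
    have : ∀ i, ∑ j, g i j = ∑ j, p i * q i j * L i j := by
      intro i
      rw [hg]; simp only
      rw [Finset.sum_sub_distrib]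
      have hc : ∑ j, (p i * q i j - p i * (μ j * q j i) / μ i) = 0 := by
        rw [Finset.sum_sub_distrib, ← Finset.mul_sum, hqrow]
        have : ∑ j, p i * (μ j * q j i) / μ i = (p i / μ i) * ∑ j, μ j * q j i := by
          rw [Finset.mul_sum]
          congr 1; ext j; ring
        rw [this, hstat i]
        ring
      rw [hc]; ring
    rw [Finset.sum_congr rfl fun i _ => (this i).symm]
  constructor
  · intro hzero i j
    have hTzero : ∑ i, ∑ j, g i j = 0 := by
      rw [← hT, ← hhalf]; exact hzero
    have hall : ∀ i ∈ Finset.univ, ∀ j ∈ Finset.univ, g i j = 0 := by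
      have h1 := (Finset.sum_eq_zero_iff_of_nonneg
        (fun i _ => Finset.sum_nonneg fun j _ => hgnonneg i j)).mp hTzero
      intro i hi j hj
      have h2 := (Finset.sum_eq_zero_iff_of_nonneg
        (fun j _ => hgnonneg i j)).mp (h1 i hi)
      exact h2 j hj
    by_cases hij : i = j
    · subst hij; rfl
    · by_cases h0 : q i j = 0
      · have h0' := hq0 i j hij h0
        rw [h0, h0']; ring
      · have hqij : 0 < q i j := lt_of_le_of_ne (hq i j hij) (Ne.symm h0)
        have hqji : 0 < q j i := (hqsym i j hij).mp hqij
        have ha : (0:ℝ) < μ i * q i j := mul_pos (hμpos i) hqij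
        have hb : (0:ℝ) < μ j * q j i := mul_pos (hμpos j) hqji
        by_contra hne
        have hrat : (μ j * q j i) / (μ i * q i j) ≠ 1 := by
          intro h
          apply hne
          field_simp at h
          rw [div_eq_iff (hμpos i).ne'] at h
          linarith
        have hlog := Real.log_lt_sub_one_of_pos (div_pos hb ha) hrat
        have hLval : L i j = - Real.log ((μ j * q j i) / (μ i * q i j)) := by
          rw [hL]; simp only
          rw [← Real.log_inv]
          congr 1
          field_simp
        have hkey : 1 - (μ j * q j i) / (μ i * q i j) < L i j := by
          rw [hLval]; linarith
        have hpq : 0 < p i * q i j := mul_pos (hppos i) hqij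
        have hmul : p i * q i j * (1 - (μ j * q j i) / (μ i * q i j))
            < p i * q i j * L i j := by
          exact mul_lt_mul_of_pos_left hkey hpq
        have hid : p i * q i j * (1 - (μ j * q j i) / (μ i * q i j))
            = p i * q i j - p i * (μ j * q j i) / μ i := by
          field_simp [(hμpos i).ne']
        have hgz := hall i (Finset.mem_univ i) j (Finset.mem_univ j)
        rw [hg] at hgz; simp only at hgz
        rw [hid] at hmul
        linarith
  · intro hdb
    have : ∀ i j, (p i * q i j - p j * q j i) * L i j = 0 := by
      intro i j
      by_cases h0 : μ i * q i j = 0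
      · have h0' : μ j * q j i = 0 := by rw [← hdb i j]; exact h0
        have hqij : q i j = 0 := by
          rcases mul_eq_zero.mp h0 with h | h
          · exact absurd h (hμpos i).ne'
          · exact h
        have hqji : q j i = 0 := by
          rcases mul_eq_zero.mp h0' with h | h
          · exact absurd h (hμpos j).ne'
          · exact h
        rw [hqij, hqji]; ring
      · have : L i j = 0 := by
          rw [hL]; simp only
          rw [← hdb i j, div_self h0, Real.log_one]
        rw [this]; ring
    have hsum : ∑ i, ∑ j, (p i * q i j - p j * q j i) * L i j = 0 := by
      apply Finset.sum_eq_zero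
      intro i _
      exact Finset.sum_eq_zero fun j _ => this i j
    rw [hsum]; ring
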